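/- Necessity of a Pareto-ranked splitting of an obedient experiment: If there exists an obedient ambiguous experiment (σ, μ) with U_s(σ, μ, τ*) > u_s^BP (ambiguous communication benefits the sender), then φ_r is not affine and there exists an obedient experiment σ̂ together with a Pareto-ranked splitting (σ̄, σ̲, λ) of σ̂ such that u_s(σ̄, τ*) > u_s^BP. -/

import Mathlib

open Finset Filter Topology

/-- A stochastic kernel from `X` to `Y`: each row `k x` is a probability vector on `Y`.
An experiment is a kernel from states `Ω` to messages; a receiver strategy is a kernel
from messages to actions `A`. -/
def IsKernel {X Y : Type*} [Fintype Y] (k : X → Y → ℝ) : Prop :=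
  (∀ x y, 0 ≤ k x y) ∧ ∀ x, ∑ y, k x y = 1

/-- A probability vector on a finite type. -/
def IsProb {Θ : Type*} [Fintype Θ] (μ : Θ → ℝ) : Prop :=
  (∀ θ, 0 ≤ μ θ) ∧ ∑ θ, μ θ = 1

/-- The obedient strategy `τ*`: take the recommended action with probability one. -/
noncomputable def tauStar {A : Type*} [DecidableEq A] : A → A → ℝ :=
  fun m a => if a = m then (1 : ℝ) else 0

/-- Expected payoff `u_i(σ, τ) = ∑_{ω,m,a} p(ω) σ(m|ω) τ(a|m) u_i(a,ω)`. -/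
noncomputable def expPayoff {Ω M A : Type*} [Fintype Ω] [Fintype M] [Fintype A]
    (p : Ω → ℝ) (u : A → Ω → ℝ) (σ : Ω → M → ℝ) (τ : M → A → ℝ) : ℝ :=
  ∑ ω, ∑ m, ∑ a, p ω * σ ω m * τ m a * u a ω

/-- Obedience of a single (unambiguous) canonical experiment: `τ*` is a best reply. -/
def Obedient {Ω A : Type*} [Fintype Ω] [Fintype A] [DecidableEq A]
    (p : Ω → ℝ) (ur : A → Ω → ℝ) (σ : Ω → A → ℝ) : Prop :=
  ∀ τ : A → A → ℝ, IsKernel τ → expPayoff p ur σ τ ≤ expPayoff p ur σ tauStar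

/-- Obedience of an ambiguous experiment `(σ, μ)` for a smooth-ambiguity receiver with
index `φr`:  `τ*` maximizes `τ ↦ U_r(σ, μ, τ) = φr⁻¹(∑_θ μ_θ φr(u_r(σ_θ, τ)))`; since `φr`
is strictly increasing this is equivalent to `τ*` maximizing `τ ↦ ∑_θ μ_θ φr(u_r(σ_θ, τ))`. -/
def AmbObedient {Ω A Θ : Type*} [Fintype Ω] [Fintype A] [DecidableEq A] [Fintype Θ]
    (φr : ℝ → ℝ) (p : Ω → ℝ) (ur : A → Ω → ℝ) (σ : Θ → Ω → A → ℝ) (μ : Θ → ℝ) : Prop :=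
  ∀ τ : A → A → ℝ, IsKernel τ →
    ∑ θ, μ θ * φr (expPayoff p ur (σ θ) τ) ≤ ∑ θ, μ θ * φr (expPayoff p ur (σ θ) tauStar)

/-- A smooth ambiguity index: strictly increasing, concave, differentiable. -/
def SmoothIndex (φ : ℝ → ℝ) : Prop :=
  StrictMono φ ∧ ConcaveOn ℝ Set.univ φ ∧ Differentiable ℝ φ

/-- Two experiments are (strictly) Pareto ranked: under obedience, sender and receiver
strictly rank them the same way. -/
def ParetoRanked {Ω A : Type*} [Fintype Ω] [Fintype A] [DecidableEq A]
    (p : Ω → ℝ) (us ur : A → Ω → ℝ) (σ σ' : Ω → A → ℝ) : Prop :=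
  (expPayoff p us σ' tauStar < expPayoff p us σ tauStar ∧
      expPayoff p ur σ' tauStar < expPayoff p ur σ tauStar) ∨
  (expPayoff p us σ tauStar < expPayoff p us σ' tauStar ∧
      expPayoff p ur σ tauStar < expPayoff p ur σ' tauStar)

/-- Two experiments are weakly Pareto ranked. -/
def WeaklyParetoRanked {Ω A : Type*} [Fintype Ω] [Fintype A] [DecidableEq A]
    (p : Ω → ℝ) (us ur : A → Ω → ℝ) (σ σ' : Ω → A → ℝ) : Prop :=
  (expPayoff p us σ' tauStar ≤ expPayoff p us σ tauStar ∧
      expPayoff p ur σ' tauStar ≤ expPayoff p ur σ tauStar) ∨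
  (expPayoff p us σ tauStar ≤ expPayoff p us σ' tauStar ∧
      expPayoff p ur σ tauStar ≤ expPayoff p ur σ' tauStar)

/-- Pointwise convex combination of two experiments. -/
noncomputable def mixExp {Ω A : Type*} (lam : ℝ) (σ1 σ2 : Ω → A → ℝ) : Ω → A → ℝ :=
  fun ω a => lam * σ1 ω a + (1 - lam) * σ2 ω a

/-- `(σbar, σlo, lam)` is a Pareto-ranked splitting of the experiment `σ`. -/
def ParetoRankedSplitting {Ω A : Type*} [Fintype Ω] [Fintype A] [DecidableEq A]
    (p : Ω → ℝ) (us ur : A → Ω → ℝ) (σbar σlo : Ω → A → ℝ) (lam : ℝ) (σ : Ω → A → ℝ) : Prop :=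
  IsKernel σbar ∧ IsKernel σlo ∧ lam ∈ Set.Ioo (0 : ℝ) 1 ∧
    mixExp lam σbar σlo = σ ∧ ParetoRanked p us ur σbar σlo

/-- The `((σbar, σlo), lam)`-probability premium of a player with utility `u` and index `φ`. -/
noncomputable def probPremium {Ω A : Type*} [Fintype Ω] [Fintype A] [DecidableEq A]
    (p : Ω → ℝ) (u : A → Ω → ℝ) (φ : ℝ → ℝ) (σbar σlo : Ω → A → ℝ) (lam : ℝ) : ℝ :=
  (φ (expPayoff p u (mixExp lam σbar σlo) tauStar) -
      lam * φ (expPayoff p u σbar tauStar) - (1 - lam) * φ (expPayoff p u σlo tauStar)) /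
    (φ (expPayoff p u σbar tauStar) - φ (expPayoff p u σlo tauStar))

/-- The set of `φs`-transformed sender values attainable by obedient ambiguous experiments;
the value of the sender's problem `(P)` equals `u` iff `φs u` is the least upper bound of
this set (since `φs` is continuous and strictly increasing). -/
def senderValues {Ω A : Type*} [Fintype Ω] [Fintype A] [DecidableEq A]
    (φs φr : ℝ → ℝ) (p : Ω → ℝ) (us ur : A → Ω → ℝ) : Set ℝ :=
  {x | ∃ (n : ℕ) (σ : Fin n → Ω → A → ℝ) (μ : Fin n → ℝ),
    (∀ j, IsKernel (σ j)) ∧ IsProb μ ∧ AmbObedient φr p ur σ μ ∧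
    x = ∑ j, μ j * φs (expPayoff p us (σ j) tauStar)}

/-- The set of feasible values of the auxiliary program `(Φ*(u))`: sums
`∑_θ λ_θ Φ_u(σ_θ)` over splittings `(λ_θ, σ_θ)` of obedient experiments, where
`Φ_u(σ) = (φs(u_s(σ,τ*)) − φs(u)) / φr'(u_r(σ,τ*))`. -/
def phiProgram {Ω A : Type*} [Fintype Ω] [Fintype A] [DecidableEq A]
    (φs φr : ℝ → ℝ) (p : Ω → ℝ) (us ur : A → Ω → ℝ) (u : ℝ) : Set ℝ :=
  {x | ∃ (n : ℕ) (σ : Fin n → Ω → A → ℝ) (lam : Fin n → ℝ),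
    (∀ j, IsKernel (σ j)) ∧ IsProb lam ∧
    Obedient p ur (fun ω a => ∑ j, lam j * σ j ω a) ∧
    x = ∑ j, lam j * ((φs (expPayoff p us (σ j) tauStar) - φs u) /
      deriv φr (expPayoff p ur (σ j) tauStar))}


section AuxLemmas

lemma tauStar_kernel {A : Type*} [Fintype A] [DecidableEq A] : IsKernel (tauStar (A := A)) := by
  constructor
  · intro m a; unfold tauStar; split_ifs <;> norm_num
  · intro m; simp [tauStar]

lemma mix_tau_kernel {X Y : Type*} [Fintype Y] {k1 k2 : X → Y → ℝ} (h1 : IsKernel k1)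
    (h2 : IsKernel k2) {ε : ℝ} (h0 : 0 ≤ ε) (hε : ε ≤ 1) :
    IsKernel (fun x y => (1 - ε) * k1 x y + ε * k2 x y) := by
  refine ⟨fun x y => add_nonneg (mul_nonneg (by linarith) (h1.1 x y)) (mul_nonneg h0 (h2.1 x y)),
    fun x => ?_⟩
  rw [Finset.sum_add_distrib, ← Finset.mul_sum, ← Finset.mul_sum, h1.2, h2.2]; ring

lemma comb_kernel {Ω A Θ : Type*} [Fintype A] [Fintype Θ] (c : Θ → ℝ)
    (hc0 : ∀ θ, 0 ≤ c θ) (hc1 : ∑ θ, c θ = 1) (σ : Θ → Ω → A → ℝ)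
    (hσ : ∀ θ, IsKernel (σ θ)) : IsKernel (fun ω a => ∑ θ, c θ * σ θ ω a) := by
  refine ⟨fun ω a => Finset.sum_nonneg fun θ _ => mul_nonneg (hc0 θ) ((hσ θ).1 ω a), fun ω => ?_⟩
  rw [Finset.sum_comm]
  calc ∑ θ, ∑ a, c θ * σ θ ω a = ∑ θ, c θ * ∑ a, σ θ ω a := by
        exact Finset.sum_congr rfl fun θ _ => (Finset.mul_sum _ _ _).symm
    _ = ∑ θ, c θ * 1 := Finset.sum_congr rfl fun θ _ => by rw [(hσ θ).2 ω]
    _ = 1 := by simpa using hc1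

lemma sum4_swap {α β γ δ : Type*} [Fintype α] [Fintype β] [Fintype γ] [Fintype δ]
    (F : α → β → γ → δ → ℝ) :
    ∑ a, ∑ b, ∑ c, ∑ d, F a b c d = ∑ d, ∑ a, ∑ b, ∑ c, F a b c d := by
  calc ∑ a, ∑ b, ∑ c, ∑ d, F a b c d = ∑ a, ∑ b, ∑ d, ∑ c, F a b c d :=
        Finset.sum_congr rfl fun a _ => Finset.sum_congr rfl fun b _ => Finset.sum_comm
    _ = ∑ a, ∑ d, ∑ b, ∑ c, F a b c d := Finset.sum_congr rfl fun a _ => Finset.sum_comm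
    _ = ∑ d, ∑ a, ∑ b, ∑ c, F a b c d := Finset.sum_comm

lemma expPayoff_comb {Ω A Θ : Type*} [Fintype Ω] [Fintype A] [Fintype Θ]
    (p : Ω → ℝ) (u : A → Ω → ℝ) (c : Θ → ℝ) (σ : Θ → Ω → A → ℝ) (τ : A → A → ℝ) :
    expPayoff p u (fun ω a => ∑ θ, c θ * σ θ ω a) τ = ∑ θ, c θ * expPayoff p u (σ θ) τ := by
  unfold expPayoff
  have h1 : ∀ ω m a, p ω * (∑ θ, c θ * σ θ ω m) * τ m a * u a ω
      = ∑ θ, c θ * (p ω * σ θ ω m * τ m a * u a ω) := by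
    intro ω m a
    rw [Finset.mul_sum, Finset.sum_mul, Finset.sum_mul]
    exact Finset.sum_congr rfl fun θ _ => by ring
  calc ∑ ω, ∑ m, ∑ a, p ω * (∑ θ, c θ * σ θ ω m) * τ m a * u a ω
      = ∑ ω, ∑ m, ∑ a, ∑ θ, c θ * (p ω * σ θ ω m * τ m a * u a ω) := by
        exact Finset.sum_congr rfl fun ω _ => Finset.sum_congr rfl fun m _ =>
          Finset.sum_congr rfl fun a _ => h1 ω m a
    _ = ∑ θ, ∑ ω, ∑ m, ∑ a, c θ * (p ω * σ θ ω m * τ m a * u a ω) :=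
        sum4_swap (fun ω m a θ => c θ * (p ω * σ θ ω m * τ m a * u a ω))
    _ = ∑ θ, c θ * ∑ ω, ∑ m, ∑ a, p ω * σ θ ω m * τ m a * u a ω := by
        refine Finset.sum_congr rfl fun θ _ => ?_
        simp only [Finset.mul_sum]

lemma expPayoff_mixExp {Ω A : Type*} [Fintype Ω] [Fintype A]
    (p : Ω → ℝ) (u : A → Ω → ℝ) (lam : ℝ) (σ1 σ2 : Ω → A → ℝ) (τ : A → A → ℝ) :
    expPayoff p u (mixExp lam σ1 σ2) τ
      = lam * expPayoff p u σ1 τ + (1 - lam) * expPayoff p u σ2 τ := by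
  unfold expPayoff mixExp
  have h1 : ∀ ω m a, p ω * (lam * σ1 ω m + (1 - lam) * σ2 ω m) * τ m a * u a ω
      = lam * (p ω * σ1 ω m * τ m a * u a ω) + (1 - lam) * (p ω * σ2 ω m * τ m a * u a ω) := by
    intro ω m a; ring
  simp only [h1, Finset.sum_add_distrib, ← Finset.mul_sum]

lemma expPayoff_tau_mix {Ω A : Type*} [Fintype Ω] [Fintype A]
    (p : Ω → ℝ) (u : A → Ω → ℝ) (σ : Ω → A → ℝ) (x y : ℝ) (τ1 τ2 : A → A → ℝ) :
    expPayoff p u σ (fun m a => x * τ1 m a + y * τ2 m a)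
      = x * expPayoff p u σ τ1 + y * expPayoff p u σ τ2 := by
  unfold expPayoff
  have h1 : ∀ ω m a, p ω * σ ω m * (x * τ1 m a + y * τ2 m a) * u a ω
      = x * (p ω * σ ω m * τ1 m a * u a ω) + y * (p ω * σ ω m * τ2 m a * u a ω) := by
    intro ω m a; ring
  simp only [h1, Finset.sum_add_distrib, ← Finset.mul_sum]

lemma deriv_nonpos_of_right_max {H : ℝ → ℝ} {d : ℝ} (hder : HasDerivAt H d 0)
    (hmax : ∀ ε : ℝ, 0 < ε → ε ≤ 1 → H ε ≤ H 0) : d ≤ 0 := by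
  have h1 : Tendsto (slope H 0) (𝓝[>] 0) (𝓝 d) :=
    (hasDerivAt_iff_tendsto_slope.mp hder).mono_left
      (nhdsWithin_mono 0 fun x hx => Set.mem_compl_singleton_iff.mpr (Set.mem_Ioi.mp hx).ne')
  refine le_of_tendsto h1 ?_
  filter_upwards [Ioc_mem_nhdsGT_of_mem (Set.left_mem_Ico.mpr zero_lt_one)] with x hx
  rw [slope_def_field]
  apply div_nonpos_of_nonpos_of_nonneg (sub_nonpos.mpr (hmax x hx.1 hx.2))
  linarith [hx.1]

lemma foc_abstract {Θ : Type*} [Fintype Θ] (φ : ℝ → ℝ) (hdiff : Differentiable ℝ φ)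
    (μ R E : Θ → ℝ)
    (hkey : ∀ ε : ℝ, 0 < ε → ε ≤ 1 →
      ∑ θ, μ θ * φ ((1 - ε) * R θ + ε * E θ) ≤ ∑ θ, μ θ * φ (R θ)) :
    ∑ θ, μ θ * deriv φ (R θ) * E θ ≤ ∑ θ, μ θ * deriv φ (R θ) * R θ := by
  have hder : HasDerivAt (fun ε : ℝ => ∑ θ, μ θ * φ (R θ + ε * (E θ - R θ)))
      (∑ θ, μ θ * (deriv φ (R θ) * (E θ - R θ))) 0 := by
    apply HasDerivAt.fun_sum
    intro θ _
    have h1 : HasDerivAt (fun ε : ℝ => R θ + ε * (E θ - R θ)) (E θ - R θ) 0 := by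
      simpa using ((hasDerivAt_id (0:ℝ)).mul_const (E θ - R θ)).const_add (R θ)
    have h2 : HasDerivAt φ (deriv φ (R θ)) ((fun ε : ℝ => R θ + ε * (E θ - R θ)) 0) := by
      simpa using (hdiff (R θ)).hasDerivAt
    exact (h2.comp 0 h1).const_mul (μ θ)
  have hmax : ∀ ε : ℝ, 0 < ε → ε ≤ 1 →
      (fun ε : ℝ => ∑ θ, μ θ * φ (R θ + ε * (E θ - R θ))) ε
        ≤ (fun ε : ℝ => ∑ θ, μ θ * φ (R θ + ε * (E θ - R θ))) 0 := by
    intro ε h1 h2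
    have e1 : ∑ θ, μ θ * φ (R θ + ε * (E θ - R θ)) = ∑ θ, μ θ * φ ((1 - ε) * R θ + ε * E θ) :=
      Finset.sum_congr rfl fun θ _ => by ring_nf
    have e2 : ∑ θ, μ θ * φ (R θ + 0 * (E θ - R θ)) = ∑ θ, μ θ * φ (R θ) :=
      Finset.sum_congr rfl fun θ _ => by norm_num
    simp only []
    rw [e1, e2]
    exact hkey ε h1 h2
  have hd0 := deriv_nonpos_of_right_max hder hmax
  have h3 : ∑ θ, (μ θ * deriv φ (R θ) * E θ - μ θ * deriv φ (R θ) * R θ) ≤ 0 := by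
    calc ∑ θ, (μ θ * deriv φ (R θ) * E θ - μ θ * deriv φ (R θ) * R θ)
        = ∑ θ, μ θ * (deriv φ (R θ) * (E θ - R θ)) := Finset.sum_congr rfl fun θ _ => by ring
      _ ≤ 0 := hd0
  rw [Finset.sum_sub_distrib] at h3
  linarith

lemma deriv_pos_of_strictMono_concave {φ : ℝ → ℝ} (hmono : StrictMono φ)
    (hconc : ConcaveOn ℝ Set.univ φ) (hdiff : Differentiable ℝ φ) (x : ℝ) :
    0 < deriv φ x := by
  have hanti : AntitoneOn (deriv φ) Set.univ :=
    hconc.antitoneOn_deriv fun y _ => (hdiff y)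
  obtain ⟨c, hc, hceq⟩ := exists_deriv_eq_slope φ (show x < x + 1 by linarith)
    (hdiff.continuous.continuousOn) (hdiff.differentiableOn)
  have hpos : 0 < deriv φ c := by
    rw [hceq]
    apply div_pos (sub_pos.2 (hmono (lt_add_one x)))
    linarith
  exact lt_of_lt_of_le hpos (hanti (Set.mem_univ x) (Set.mem_univ c) hc.1.le)

lemma cheby_strict {Θ : Type*} [Fintype Θ] (μ g h : Θ → ℝ) (hμ0 : ∀ θ, 0 ≤ μ θ)
    (hcomp : ∀ θ θ', (h θ - h θ') * (g θ - g θ') ≤ 0)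
    (θa θb : Θ) (hμa : 0 < μ θa) (hμb : 0 < μ θb)
    (hstrict : (h θa - h θb) * (g θa - g θb) < 0) :
    (∑ θ, μ θ * h θ * g θ) * (∑ θ, μ θ) < (∑ θ, μ θ * h θ) * (∑ θ, μ θ * g θ) := by
  have hterm : ∀ θ θ', (μ θ * μ θ') * ((h θ - h θ') * (g θ - g θ')) ≤ 0 := fun θ θ' =>
    mul_nonpos_iff.mpr (Or.inl ⟨mul_nonneg (hμ0 θ) (hμ0 θ'), hcomp θ θ'⟩)
  have hS : ∑ θ, ∑ θ', (μ θ * μ θ') * ((h θ - h θ') * (g θ - g θ')) < 0 := by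
    have hθa : ∑ θ', (μ θa * μ θ') * ((h θa - h θ') * (g θa - g θ')) < 0 := by
      have := Finset.sum_lt_sum (f := fun θ' => (μ θa * μ θ') * ((h θa - h θ') * (g θa - g θ')))
        (g := fun _ => (0:ℝ)) (fun i _ => hterm θa i)
        ⟨θb, Finset.mem_univ θb, mul_neg_of_pos_of_neg (mul_pos hμa hμb) hstrict⟩
      simpa using this
    have := Finset.sum_lt_sum
      (f := fun θ => ∑ θ', (μ θ * μ θ') * ((h θ - h θ') * (g θ - g θ')))
      (g := fun _ => (0:ℝ))
      (fun θ _ => Finset.sum_nonpos fun θ' _ => hterm θ θ')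
      ⟨θa, Finset.mem_univ θa, hθa⟩
    simpa using this
  have e1 : (∑ θ, μ θ * h θ * g θ) * (∑ θ, μ θ)
      = ∑ θ, ∑ θ', (μ θ * h θ * g θ) * μ θ' := Finset.sum_mul_sum _ _ _ _
  have e2 : (∑ θ, μ θ * h θ) * (∑ θ, μ θ * g θ)
      = ∑ θ, ∑ θ', (μ θ * h θ) * (μ θ' * g θ') := Finset.sum_mul_sum _ _ _ _
  have e3 : (∑ θ, μ θ * g θ) * (∑ θ, μ θ * h θ)
      = ∑ θ, ∑ θ', (μ θ * g θ) * (μ θ' * h θ') := Finset.sum_mul_sum _ _ _ _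
  have e4 : (∑ θ, μ θ) * (∑ θ, μ θ * h θ * g θ)
      = ∑ θ, ∑ θ', μ θ * (μ θ' * h θ' * g θ') := Finset.sum_mul_sum _ _ _ _
  have hid : ∑ θ, ∑ θ', (μ θ * μ θ') * ((h θ - h θ') * (g θ - g θ'))
      = 2 * ((∑ θ, μ θ * h θ * g θ) * (∑ θ, μ θ))
        - 2 * ((∑ θ, μ θ * h θ) * (∑ θ, μ θ * g θ)) := by
    calc ∑ θ, ∑ θ', (μ θ * μ θ') * ((h θ - h θ') * (g θ - g θ'))
        = ∑ θ, ∑ θ', ((μ θ * h θ * g θ) * μ θ' - (μ θ * h θ) * (μ θ' * g θ')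
            - (μ θ * g θ) * (μ θ' * h θ') + μ θ * (μ θ' * h θ' * g θ')) :=
          Finset.sum_congr rfl fun θ _ => Finset.sum_congr rfl fun θ' _ => by ring
      _ = ∑ θ, ((∑ θ', (μ θ * h θ * g θ) * μ θ') - (∑ θ', (μ θ * h θ) * (μ θ' * g θ'))
            - (∑ θ', (μ θ * g θ) * (μ θ' * h θ')) + ∑ θ', μ θ * (μ θ' * h θ' * g θ')) := by
          refine Finset.sum_congr rfl fun θ _ => ?_
          rw [Finset.sum_add_distrib, Finset.sum_sub_distrib, Finset.sum_sub_distrib]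
      _ = (∑ θ, ∑ θ', (μ θ * h θ * g θ) * μ θ') - (∑ θ, ∑ θ', (μ θ * h θ) * (μ θ' * g θ'))
            - (∑ θ, ∑ θ', (μ θ * g θ) * (μ θ' * h θ'))
            + ∑ θ, ∑ θ', μ θ * (μ θ' * h θ' * g θ') := by
          rw [Finset.sum_add_distrib, Finset.sum_sub_distrib, Finset.sum_sub_distrib]
      _ = _ := by rw [← e1, ← e2, ← e3, ← e4]; ring
  linarith


end AuxLemmas

/-- Theorem 3: if some obedient ambiguous experiment benefits the sender
(`U_s(σ, μ, τ*) > u_s^BP`, stated via the strictly increasing `φs`), then `φr` is not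
affine and there exists an obedient experiment `σhat` with a Pareto-ranked splitting
`(σbar, σlo, lam)` such that `u_s(σbar, τ*) > u_s^BP`. -/
theorem necessity_of_pareto_ranked_splitting
    {Ω A Θ : Type*} [Fintype Ω] [Fintype A] [DecidableEq A] [Fintype Θ]
    (p : Ω → ℝ) (hp : IsProb p) (us ur : A → Ω → ℝ)
    (φs φr : ℝ → ℝ) (hφs : SmoothIndex φs) (hφr : SmoothIndex φr)
    (usBP : ℝ)
    (husBP : IsGreatest {x : ℝ | ∃ σ0 : Ω → A → ℝ,
      IsKernel σ0 ∧ Obedient p ur σ0 ∧ x = expPayoff p us σ0 tauStar} usBP)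
    (σ : Θ → Ω → A → ℝ) (hσ : ∀ θ, IsKernel (σ θ)) (μ : Θ → ℝ) (hμ : IsProb μ)
    (hobed : AmbObedient φr p ur σ μ)
    (hben : φs usBP < ∑ θ, μ θ * φs (expPayoff p us (σ θ) tauStar)) :
    (¬ ∃ α β : ℝ, ∀ x, φr x = α * x + β) ∧
    ∃ (σhat σbar σlo : Ω → A → ℝ) (lam : ℝ),
      IsKernel σhat ∧ Obedient p ur σhat ∧
      ParetoRankedSplitting p us ur σbar σlo lam σhat ∧
      usBP < expPayoff p us σbar tauStar := by
  
  obtain ⟨hμ0, hμ1⟩ := hμ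
  obtain ⟨hφs_mono, hφs_conc, hφs_diff⟩ := hφs
  obtain ⟨hφr_mono, hφr_conc, hφr_diff⟩ := hφr
  -- usBP is an upper bound over obedient experiments
  have hub : ∀ σ0 : Ω → A → ℝ, IsKernel σ0 → Obedient p ur σ0 →
      expPayoff p us σ0 tauStar ≤ usBP := fun σ0 h1 h2 => husBP.2 ⟨σ0, h1, h2, rfl⟩
  -- Jensen's inequality for the sender
  have hjensen : ∑ θ, μ θ * φs (expPayoff p us (σ θ) tauStar)
      ≤ φs (∑ θ, μ θ * expPayoff p us (σ θ) tauStar) := by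
    have := hφs_conc.le_map_sum (t := Finset.univ) (w := μ)
      (p := fun θ => expPayoff p us (σ θ) tauStar) (fun i _ => hμ0 i) hμ1
      (fun i _ => Set.mem_univ _)
    simpa [smul_eq_mul] using this
  have hsbar : usBP < ∑ θ, μ θ * expPayoff p us (σ θ) tauStar :=
    hφs_mono.lt_iff_lt.mp (lt_of_lt_of_le hben hjensen)
  have hμker : IsKernel (fun ω a => ∑ θ, μ θ * σ θ ω a) := comb_kernel μ hμ0 hμ1 σ hσ
  have hnotob : ¬ Obedient p ur (fun ω a => ∑ θ, μ θ * σ θ ω a) := by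
    intro hob
    have h := hub _ hμker hob
    rw [expPayoff_comb] at h
    linarith
  constructor
  · -- φr is not affine
    rintro ⟨α, β, hab⟩
    apply hnotob
    intro τ hτ
    have hα : 0 < α := by
      have h01 := hφr_mono (show (0:ℝ) < 1 by norm_num)
      rw [hab 0, hab 1] at h01; linarith
    have h := hobed τ hτ
    simp only [hab] at h
    have expand : ∀ G : Θ → ℝ, ∑ θ, μ θ * (α * G θ + β) = α * (∑ θ, μ θ * G θ) + β := by
      intro G
      calc ∑ θ, μ θ * (α * G θ + β) = ∑ θ, (α * (μ θ * G θ) + β * μ θ) :=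
            Finset.sum_congr rfl fun θ _ => by ring
        _ = α * (∑ θ, μ θ * G θ) + β * ∑ θ, μ θ := by
            rw [Finset.sum_add_distrib, ← Finset.mul_sum, ← Finset.mul_sum]
        _ = α * (∑ θ, μ θ * G θ) + β := by rw [hμ1, mul_one]
    rw [expand, expand] at h
    rw [expPayoff_comb, expPayoff_comb]
    exact le_of_mul_le_mul_left ((add_le_add_iff_right β).mp h) hα
  · -- main construction
    have hfpos : ∀ θ, 0 < deriv φr (expPayoff p ur (σ θ) tauStar) := fun θ =>
      deriv_pos_of_strictMono_concave hφr_mono hφr_conc hφr_diff _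
    have hanti : AntitoneOn (deriv φr) Set.univ :=
      hφr_conc.antitoneOn_deriv fun y _ => hφr_diff y
    obtain ⟨θ0, hθ0⟩ : ∃ θ0, 0 < μ θ0 := by
      by_contra hcon; push_neg at hcon
      have h0 : (1:ℝ) ≤ 0 := hμ1 ▸ Finset.sum_nonpos fun θ _ => hcon θ
      linarith
    set Z : ℝ := ∑ θ, μ θ * deriv φr (expPayoff p ur (σ θ) tauStar) with hZdef
    have hZ : 0 < Z := Finset.sum_pos' (fun θ _ => mul_nonneg (hμ0 θ) (hfpos θ).le)
      ⟨θ0, Finset.mem_univ θ0, mul_pos hθ0 (hfpos θ0)⟩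
    set ν : Θ → ℝ := fun θ => μ θ * deriv φr (expPayoff p ur (σ θ) tauStar) / Z with hνdef
    have hν0 : ∀ θ, 0 ≤ ν θ := fun θ => div_nonneg (mul_nonneg (hμ0 θ) (hfpos θ).le) hZ.le
    have hν1 : ∑ θ, ν θ = 1 := by
      simp only [hνdef]
      rw [← Finset.sum_div, ← hZdef, div_self hZ.ne']
    have e : ∀ G : Θ → ℝ, ∑ θ, ν θ * G θ
        = (∑ θ, μ θ * deriv φr (expPayoff p ur (σ θ) tauStar) * G θ) / Z := by
      intro G
      rw [Finset.sum_div]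
      refine Finset.sum_congr rfl fun θ _ => ?_
      simp only [hνdef]
      rw [div_mul_eq_mul_div]
    set σt : Ω → A → ℝ := fun ω a => ∑ θ, ν θ * σ θ ω a with hσtdef
    have hσt_ker : IsKernel σt := by
      rw [hσtdef]; exact comb_kernel ν hν0 hν1 σ hσ
    have hEt : ∀ (u : A → Ω → ℝ) (τ : A → A → ℝ),
        expPayoff p u σt τ = ∑ θ, ν θ * expPayoff p u (σ θ) τ := by
      intro u τ
      rw [hσtdef]; exact expPayoff_comb p u ν σ τ
    have hob_t : Obedient p ur σt := by
      intro τ hτ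
      have hkey : ∀ ε : ℝ, 0 < ε → ε ≤ 1 →
          ∑ θ, μ θ * φr ((1 - ε) * expPayoff p ur (σ θ) tauStar
              + ε * expPayoff p ur (σ θ) τ)
            ≤ ∑ θ, μ θ * φr (expPayoff p ur (σ θ) tauStar) := by
        intro ε hε1 hε2
        have hker : IsKernel (fun m a => (1 - ε) * tauStar m a + ε * τ m a) :=
          mix_tau_kernel tauStar_kernel hτ hε1.le hε2
        have h := hobed _ hker
        have heq : ∀ θ, expPayoff p ur (σ θ) (fun m a => (1 - ε) * tauStar m a + ε * τ m a)
            = (1 - ε) * expPayoff p ur (σ θ) tauStar + ε * expPayoff p ur (σ θ) τ :=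
          fun θ => expPayoff_tau_mix p ur (σ θ) (1 - ε) ε tauStar τ
        have hsum_eq : ∑ θ, μ θ * φr ((1 - ε) * expPayoff p ur (σ θ) tauStar
              + ε * expPayoff p ur (σ θ) τ)
            = ∑ θ, μ θ * φr (expPayoff p ur (σ θ)
                (fun m a => (1 - ε) * tauStar m a + ε * τ m a)) :=
          Finset.sum_congr rfl fun θ _ => by rw [heq θ]
        rw [hsum_eq]
        exact h
      have hfoc : ∑ θ, μ θ * deriv φr (expPayoff p ur (σ θ) tauStar) * expPayoff p ur (σ θ) τ
          ≤ ∑ θ, μ θ * deriv φr (expPayoff p ur (σ θ) tauStar)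
              * expPayoff p ur (σ θ) tauStar :=
        foc_abstract φr hφr_diff μ (fun θ => expPayoff p ur (σ θ) tauStar)
          (fun θ => expPayoff p ur (σ θ) τ) hkey
      rw [hEt ur τ, hEt ur tauStar]
      have eτ : ∑ θ, ν θ * expPayoff p ur (σ θ) τ
          = (∑ θ, μ θ * deriv φr (expPayoff p ur (σ θ) tauStar)
              * expPayoff p ur (σ θ) τ) / Z := e _
      have estar : ∑ θ, ν θ * expPayoff p ur (σ θ) tauStar
          = (∑ θ, μ θ * deriv φr (expPayoff p ur (σ θ) tauStar)
              * expPayoff p ur (σ θ) tauStar) / Z := e _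
      rw [eτ, estar]
      exact div_le_div_of_nonneg_right hfoc hZ.le
    have hEt_us : expPayoff p us σt tauStar ≤ usBP := hub σt hσt_ker hob_t
    by_cases hdeg : ∀ θa θb, 0 < μ θa → 0 < μ θb →
        deriv φr (expPayoff p ur (σ θa) tauStar) = deriv φr (expPayoff p ur (σ θb) tauStar)
    · -- degenerate case: the plain mixture is obedient, contradiction
      exfalso
      have hZeq : Z = deriv φr (expPayoff p ur (σ θ0) tauStar) := by
        rw [hZdef]
        calc ∑ θ, μ θ * deriv φr (expPayoff p ur (σ θ) tauStar)
            = ∑ θ, μ θ * deriv φr (expPayoff p ur (σ θ0) tauStar) := by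
              refine Finset.sum_congr rfl fun θ' _ => ?_
              rcases lt_or_eq_of_le (hμ0 θ') with hpos | hzero
              · rw [hdeg θ' θ0 hpos hθ0]
              · rw [← hzero, zero_mul, zero_mul]
          _ = (∑ θ, μ θ) * deriv φr (expPayoff p ur (σ θ0) tauStar) := by
              rw [Finset.sum_mul]
          _ = _ := by rw [hμ1, one_mul]
      have hνμ : ∀ θ, ν θ = μ θ := by
        intro θ
        simp only [hνdef]
        rcases lt_or_eq_of_le (hμ0 θ) with hpos | hzero
        · rw [hdeg θ θ0 hpos hθ0, ← hZeq, mul_div_assoc, div_self hZ.ne', mul_one]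
        · rw [← hzero, zero_mul, zero_div]
      have hσteq : σt = (fun ω a => ∑ θ, μ θ * σ θ ω a) := by
        rw [hσtdef]
        funext ω a
        exact Finset.sum_congr rfl fun θ _ => by rw [hνμ θ]
      rw [hσteq] at hob_t
      exact hnotob hob_t
    · -- nondegenerate case
      push_neg at hdeg
      obtain ⟨θa, θb, hμa, hμb, hne⟩ := hdeg
      have hcomp : ∀ θ θ', (deriv φr (expPayoff p ur (σ θ) tauStar)
            - deriv φr (expPayoff p ur (σ θ') tauStar))
          * (expPayoff p ur (σ θ) tauStar - expPayoff p ur (σ θ') tauStar) ≤ 0 := by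
        intro θ θ'
        rcases le_total (expPayoff p ur (σ θ) tauStar) (expPayoff p ur (σ θ') tauStar)
          with hle | hle
        · exact mul_nonpos_iff.mpr (Or.inl
            ⟨sub_nonneg.mpr (hanti (Set.mem_univ _) (Set.mem_univ _) hle),
             sub_nonpos.mpr hle⟩)
        · exact mul_nonpos_iff.mpr (Or.inr
            ⟨sub_nonpos.mpr (hanti (Set.mem_univ _) (Set.mem_univ _) hle),
             sub_nonneg.mpr hle⟩)
      have hstrict : (deriv φr (expPayoff p ur (σ θa) tauStar)
            - deriv φr (expPayoff p ur (σ θb) tauStar))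
          * (expPayoff p ur (σ θa) tauStar - expPayoff p ur (σ θb) tauStar) < 0 := by
        have hRne : expPayoff p ur (σ θa) tauStar ≠ expPayoff p ur (σ θb) tauStar := by
          intro hR; exact hne (by rw [hR])
        rcases lt_or_gt_of_ne hRne with h | h
        · have h1 : deriv φr (expPayoff p ur (σ θb) tauStar)
              ≤ deriv φr (expPayoff p ur (σ θa) tauStar) :=
            hanti (Set.mem_univ _) (Set.mem_univ _) h.le
          have h2 : deriv φr (expPayoff p ur (σ θb) tauStar)
              ≠ deriv φr (expPayoff p ur (σ θa) tauStar) := fun hh => hne hh.symm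
          exact mul_neg_of_pos_of_neg (sub_pos.mpr (lt_of_le_of_ne h1 h2))
            (sub_neg.mpr h)
        · have h1 : deriv φr (expPayoff p ur (σ θa) tauStar)
              ≤ deriv φr (expPayoff p ur (σ θb) tauStar) :=
            hanti (Set.mem_univ _) (Set.mem_univ _) h.le
          exact mul_neg_of_neg_of_pos (sub_neg.mpr (lt_of_le_of_ne h1 hne))
            (sub_pos.mpr h)
      -- receiver strictly prefers the plain mixture to σt
      have hch : (∑ θ, μ θ * deriv φr (expPayoff p ur (σ θ) tauStar)
            * expPayoff p ur (σ θ) tauStar)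
          < Z * (∑ θ, μ θ * expPayoff p ur (σ θ) tauStar) := by
        have h := cheby_strict μ (fun θ => expPayoff p ur (σ θ) tauStar)
          (fun θ => deriv φr (expPayoff p ur (σ θ) tauStar)) hμ0 hcomp θa θb hμa hμb hstrict
        rw [hμ1, mul_one] at h
        rw [hZdef]
        exact h
      have hr_strict : expPayoff p ur σt tauStar
          < expPayoff p ur (fun ω a => ∑ θ, μ θ * σ θ ω a) tauStar := by
        rw [hEt ur tauStar, expPayoff_comb]
        have estar : ∑ θ, ν θ * expPayoff p ur (σ θ) tauStar
            = (∑ θ, μ θ * deriv φr (expPayoff p ur (σ θ) tauStar)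
                * expPayoff p ur (σ θ) tauStar) / Z := e _
        rw [estar, div_lt_iff₀ hZ]
        nlinarith [hch]
      -- choice of lam
      obtain ⟨θm, -, hθm⟩ := Finset.exists_min_image Finset.univ
        (fun θ => deriv φr (expPayoff p ur (σ θ) tauStar)) ⟨θ0, Finset.mem_univ θ0⟩
      set c : ℝ := deriv φr (expPayoff p ur (σ θm) tauStar) / Z with hcdef
      have hc : 0 < c := div_pos (hfpos θm) hZ
      set lam : ℝ := min (1/2) c with hlamdef
      have hlam0 : 0 < lam := lt_min (by norm_num) hc
      have hlam1 : lam < 1 := lt_of_le_of_lt (min_le_left _ _) (by norm_num)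
      have h1lam : 0 < 1 - lam := by linarith
      have hlamle : ∀ θ, lam * μ θ ≤ ν θ := by
        intro θ
        have h1 : lam ≤ c := min_le_right _ _
        have h2 : c * μ θ ≤ ν θ := by
          simp only [hνdef, hcdef]
          rw [div_mul_eq_mul_div]
          apply div_le_div_of_nonneg_right _ hZ.le
          rw [mul_comm]
          exact mul_le_mul_of_nonneg_left (hθm θ (Finset.mem_univ θ)) (hμ0 θ)
        calc lam * μ θ ≤ c * μ θ := mul_le_mul_of_nonneg_right h1 (hμ0 θ)
          _ ≤ ν θ := h2
      have hdom : ∀ ω a, lam * (∑ θ, μ θ * σ θ ω a) ≤ σt ω a := by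
        intro ω a
        rw [hσtdef, Finset.mul_sum]
        apply Finset.sum_le_sum
        intro θ _
        calc lam * (μ θ * σ θ ω a) = (lam * μ θ) * σ θ ω a := by ring
          _ ≤ ν θ * σ θ ω a := mul_le_mul_of_nonneg_right (hlamle θ) ((hσ θ).1 ω a)
      set σlo : Ω → A → ℝ :=
        fun ω a => (σt ω a - lam * (∑ θ, μ θ * σ θ ω a)) / (1 - lam) with hlodef
      have hrow : ∀ ω', ∑ a, ∑ θ, μ θ * σ θ ω' a = 1 := fun ω' => hμker.2 ω'
      have hσlo_ker : IsKernel σlo := by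
        constructor
        · intro ω a
          simp only [hlodef]
          exact div_nonneg (by linarith [hdom ω a]) h1lam.le
        · intro ω
          simp only [hlodef]
          rw [← Finset.sum_div, Finset.sum_sub_distrib, ← Finset.mul_sum,
            hσt_ker.2 ω, hrow ω, mul_one]
          exact div_self h1lam.ne'
      have hmix : mixExp lam (fun ω a => ∑ θ, μ θ * σ θ ω a) σlo = σt := by
        funext ω a
        simp only [mixExp, hlodef]
        rw [mul_comm ((1:ℝ) - lam), div_mul_cancel₀ _ h1lam.ne']
        ring
      have hsplit : ∀ u : A → Ω → ℝ, expPayoff p u σt tauStar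
          = lam * expPayoff p u (fun ω a => ∑ θ, μ θ * σ θ ω a) tauStar
            + (1 - lam) * expPayoff p u σlo tauStar := by
        intro u
        rw [← hmix, expPayoff_mixExp]
      refine ⟨σt, (fun ω a => ∑ θ, μ θ * σ θ ω a), σlo, lam, hσt_ker, hob_t,
        ⟨hμker, hσlo_ker, Set.mem_Ioo.mpr ⟨hlam0, hlam1⟩, hmix, Or.inl ⟨?_, ?_⟩⟩, ?_⟩
      · -- sender: σlo strictly worse than σbar
        have h1 : expPayoff p us σt tauStar
            < expPayoff p us (fun ω a => ∑ θ, μ θ * σ θ ω a) tauStar := by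
          calc expPayoff p us σt tauStar ≤ usBP := hEt_us
            _ < ∑ θ, μ θ * expPayoff p us (σ θ) tauStar := hsbar
            _ = expPayoff p us (fun ω a => ∑ θ, μ θ * σ θ ω a) tauStar :=
                (expPayoff_comb p us μ σ tauStar).symm
        have h2 := hsplit us
        have h3 : (1 - lam) * expPayoff p us σlo tauStar
            < (1 - lam) * expPayoff p us (fun ω a => ∑ θ, μ θ * σ θ ω a) tauStar := by
          nlinarith [h1, h2]
        exact lt_of_mul_lt_mul_left h3 h1lam.le
      · -- receiver: σlo strictly worse than σbar
        have h2 := hsplit ur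
        have h3 : (1 - lam) * expPayoff p ur σlo tauStar
            < (1 - lam) * expPayoff p ur (fun ω a => ∑ θ, μ θ * σ θ ω a) tauStar := by
          nlinarith [hr_strict, h2]
        exact lt_of_mul_lt_mul_left h3 h1lam.le
      · rw [expPayoff_comb]
        exact hsbar
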